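/- Let V : ℝⁿ → ℝⁿ be Lipschitz continuous with Lipschitz constant L. Then for all θ ∈ ℝ and x,y ∈ ℝⁿ, ‖Ψ₂^V(θ,x) − x − Ψ₂^V(θ,y) + y‖ ≤ |θ|L(1 + |θ|L/2)‖x − y‖. -/

import Mathlib

noncomputable section

/-- Euclidean space ℝⁿ. -/
abbrev Vec (n : ℕ) : Type := EuclideanSpace ℝ (Fin n)

/-- Explicit second-order Runge–Kutta map `Ψ₂^V`. -/
def rk2 {n : ℕ} (V : Vec n → Vec n) (θ : ℝ) (x : Vec n) : Vec n :=
  x + (θ / 2) • V x + (θ / 2) • V (x + θ • V x)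

/-- stability of the second-order Runge–Kutta map for a Lipschitz
vector field `V` with Lipschitz constant `L`. -/
theorem rk2_stability {n : ℕ} (V : Vec n → Vec n) (L : NNReal)
    (hV : LipschitzWith L V) :
    ∀ (θ : ℝ) (x y : Vec n),
      ‖rk2 V θ x - x - rk2 V θ y + y‖ ≤
        |θ| * L * (1 + |θ| * L / 2) * ‖x - y‖ := by
  intro θ x y
  have hL : ∀ a b : Vec n, ‖V a - V b‖ ≤ L * ‖a - b‖ := by
    intro a b
    have := hV.dist_le_mul a b
    simpa [dist_eq_norm] using this
  have key : rk2 V θ x - x - rk2 V θ y + y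
      = (θ / 2) • (V x - V y) + (θ / 2) • (V (x + θ • V x) - V (y + θ • V y)) := by
    simp only [rk2, smul_sub]
    abel
  rw [key]
  have h1 : ‖(θ / 2) • (V x - V y)‖ ≤ |θ| / 2 * (L * ‖x - y‖) := by
    rw [norm_smul, Real.norm_eq_abs, abs_div]
    have := hL x y
    have h2 : (0:ℝ) ≤ |θ| / 2 := by positivity
    calc |θ| / |2| * ‖V x - V y‖ = |θ| / 2 * ‖V x - V y‖ := by norm_num
      _ ≤ |θ| / 2 * (L * ‖x - y‖) := by exact mul_le_mul_of_nonneg_left this h2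
  have h3 : ‖x + θ • V x - (y + θ • V y)‖ ≤ ‖x - y‖ + |θ| * (L * ‖x - y‖) := by
    have heq : x + θ • V x - (y + θ • V y) = (x - y) + θ • (V x - V y) := by
      rw [smul_sub]; abel
    rw [heq]
    calc ‖(x - y) + θ • (V x - V y)‖ ≤ ‖x - y‖ + ‖θ • (V x - V y)‖ := norm_add_le _ _
      _ ≤ ‖x - y‖ + |θ| * (L * ‖x - y‖) := by
          rw [norm_smul, Real.norm_eq_abs]
          exact add_le_add_right (mul_le_mul_of_nonneg_left (hL x y) (abs_nonneg θ)) _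
  have h2 : ‖(θ / 2) • (V (x + θ • V x) - V (y + θ • V y))‖
      ≤ |θ| / 2 * (L * (‖x - y‖ + |θ| * (L * ‖x - y‖))) := by
    rw [norm_smul, Real.norm_eq_abs, abs_div]
    have hb := (hL (x + θ • V x) (y + θ • V y)).trans
      (mul_le_mul_of_nonneg_left h3 L.coe_nonneg)
    have h2' : (0:ℝ) ≤ |θ| / 2 := by positivity
    calc |θ| / |2| * ‖V (x + θ • V x) - V (y + θ • V y)‖
        = |θ| / 2 * ‖V (x + θ • V x) - V (y + θ • V y)‖ := by norm_num
      _ ≤ |θ| / 2 * (L * (‖x - y‖ + |θ| * (L * ‖x - y‖))) :=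
          mul_le_mul_of_nonneg_left hb h2'
  calc ‖(θ / 2) • (V x - V y) + (θ / 2) • (V (x + θ • V x) - V (y + θ • V y))‖
      ≤ |θ| / 2 * (L * ‖x - y‖) + |θ| / 2 * (L * (‖x - y‖ + |θ| * (L * ‖x - y‖))) :=
        (norm_add_le _ _).trans (add_le_add h1 h2)
    _ = |θ| * L * (1 + |θ| * L / 2) * ‖x - y‖ := by ring
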